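/- Let X be a Hermitian matrix with all eigenvalues in [0,1] and X ≠ X², and let p(x) = 3x² − 2x³ be the McWeeny polynomial. Define K(X) = ‖X − X²‖_F / ‖X − X²‖₂ (Frobenius norm over spectral norm). Then K(p(X)) ≤ K(X)², provided p(X) ≠ p(X)². -/

import Mathlib

open Matrix Set

/-- Spectral norm (operator 2-norm) of a complex matrix. -/
noncomputable def specNorm {n : ℕ} (A : Matrix (Fin n) (Fin n) ℂ) : ℝ :=
  ‖(Matrix.toEuclideanLin A).toContinuousLinearMap‖

/-- Frobenius norm of a complex matrix. -/
noncomputable def frobNorm {n : ℕ} (A : Matrix (Fin n) (Fin n) ℂ) : ℝ :=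
  Real.sqrt (∑ i, ∑ j, ‖A i j‖ ^ 2)

namespace McWeenyAux

variable {n : ℕ}

lemma specNorm_nonneg (A : Matrix (Fin n) (Fin n) ℂ) : 0 ≤ specNorm A :=
  norm_nonneg _

lemma euclidean_apply (A : Matrix (Fin n) (Fin n) ℂ) (v : EuclideanSpace ℂ (Fin n)) (i : Fin n) :
    (Matrix.toEuclideanLin A v) i = A.mulVec (fun j => v j) i := rfl

lemma specNorm_diag_le (c : Fin n → ℂ) {M : ℝ} (hM : 0 ≤ M)
    (h : ∀ i, ‖c i‖ ≤ M) : specNorm (diagonal c) ≤ M := by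
  apply ContinuousLinearMap.opNorm_le_bound _ hM
  intro v
  rw [LinearMap.coe_toContinuousLinearMap']
  rw [show ‖Matrix.toEuclideanLin (diagonal c) v‖ = Real.sqrt (∑ i, ‖(Matrix.toEuclideanLin (diagonal c) v) i‖ ^ 2) from EuclideanSpace.norm_eq _,
    show ‖v‖ = Real.sqrt (∑ i, ‖v i‖ ^ 2) from EuclideanSpace.norm_eq _]
  rw [← Real.sqrt_sq hM, ← Real.sqrt_mul (sq_nonneg M)]
  apply Real.sqrt_le_sqrt
  rw [Finset.mul_sum]
  apply Finset.sum_le_sum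
  intro i _
  rw [euclidean_apply, mulVec_diagonal, norm_mul, mul_pow]
  have h1 : ‖c i‖ ^ 2 ≤ M ^ 2 := by nlinarith [norm_nonneg (c i), h i]
  exact mul_le_mul_of_nonneg_right h1 (by positivity)

lemma le_specNorm_diag (c : Fin n → ℂ) (i : Fin n) : ‖c i‖ ≤ specNorm (diagonal c) := by
  have hv := ContinuousLinearMap.le_opNorm
      (Matrix.toEuclideanLin (diagonal c)).toContinuousLinearMap (EuclideanSpace.single i 1)
  rw [LinearMap.coe_toContinuousLinearMap'] at hv
  have h1 : Matrix.toEuclideanLin (diagonal c) (EuclideanSpace.single i 1)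
      = EuclideanSpace.single i (c i) := by
    ext j
    rw [euclidean_apply, mulVec_diagonal]
    simp only [EuclideanSpace.single_apply]
    split_ifs with hji
    · subst hji; ring
    · ring
  rw [h1, EuclideanSpace.norm_single, EuclideanSpace.norm_single, norm_one, mul_one] at hv
  exact hv

open scoped Matrix.Norms.L2Operator in
lemma specNorm_eq (A : Matrix (Fin n) (Fin n) ℂ) : specNorm A = ‖A‖ := rfl

lemma specNorm_mul_le (A B : Matrix (Fin n) (Fin n) ℂ) :
    specNorm (A * B) ≤ specNorm A * specNorm B := by
  simp only [specNorm_eq]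
  exact Matrix.l2_opNorm_mul A B

lemma specNorm_unitary (U : Matrix.unitaryGroup (Fin n) ℂ) :
    specNorm (U : Matrix (Fin n) (Fin n) ℂ) ≤ 1 := by
  have h2 : specNorm ((U : Matrix (Fin n) (Fin n) ℂ)ᴴ * (U : Matrix (Fin n) (Fin n) ℂ)) ≤ 1 := by
    rw [← Matrix.star_eq_conjTranspose, Unitary.coe_star_mul_self, ← Matrix.diagonal_one]
    exact specNorm_diag_le _ zero_le_one (fun i => by simp)
  have h3 := Matrix.l2_opNorm_conjTranspose_mul_self (U : Matrix (Fin n) (Fin n) ℂ)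
  rw [← specNorm_eq, ← specNorm_eq] at h3
  nlinarith [specNorm_nonneg (U : Matrix (Fin n) (Fin n) ℂ)]

lemma specNorm_conj (U : Matrix.unitaryGroup (Fin n) ℂ) (A : Matrix (Fin n) (Fin n) ℂ) :
    specNorm ((U : Matrix (Fin n) (Fin n) ℂ) * A * star (U : Matrix (Fin n) (Fin n) ℂ)) = specNorm A := by
  have key : ∀ (V : Matrix.unitaryGroup (Fin n) ℂ) (B : Matrix (Fin n) (Fin n) ℂ),
      specNorm ((V : Matrix (Fin n) (Fin n) ℂ) * B * star (V : Matrix (Fin n) (Fin n) ℂ)) ≤ specNorm B := by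
    intro V B
    have hV : specNorm (↑V : Matrix (Fin n) (Fin n) ℂ) ≤ 1 := specNorm_unitary V
    have hsV : specNorm (star (↑V : Matrix (Fin n) (Fin n) ℂ)) ≤ 1 := by
      rw [← Unitary.coe_star]
      exact specNorm_unitary (star V)
    calc specNorm ((V : Matrix (Fin n) (Fin n) ℂ) * B * star (V : Matrix (Fin n) (Fin n) ℂ))
        ≤ specNorm ((↑V : Matrix (Fin n) (Fin n) ℂ) * B) * specNorm (star (↑V : Matrix (Fin n) (Fin n) ℂ)) :=
          specNorm_mul_le _ _
      _ ≤ specNorm ((↑V : Matrix (Fin n) (Fin n) ℂ) * B) :=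
          mul_le_of_le_one_right (specNorm_nonneg _) hsV
      _ ≤ specNorm (↑V : Matrix (Fin n) (Fin n) ℂ) * specNorm B := specNorm_mul_le _ _
      _ ≤ specNorm B := by
          have := specNorm_nonneg B
          nlinarith
  apply le_antisymm (key U A)
  have hsU : star (U : Matrix (Fin n) (Fin n) ℂ) * (U : Matrix (Fin n) (Fin n) ℂ) = 1 :=
    Unitary.coe_star_mul_self U
  have hA : ((star U : Matrix.unitaryGroup (Fin n) ℂ) : Matrix (Fin n) (Fin n) ℂ)
      * ((U : Matrix (Fin n) (Fin n) ℂ) * A * star (U : Matrix (Fin n) (Fin n) ℂ))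
      * star ((star U : Matrix.unitaryGroup (Fin n) ℂ) : Matrix (Fin n) (Fin n) ℂ) = A := by
    rw [Unitary.coe_star, star_star]
    calc star (U : Matrix (Fin n) (Fin n) ℂ)
          * ((U : Matrix (Fin n) (Fin n) ℂ) * A * star (U : Matrix (Fin n) (Fin n) ℂ))
          * (U : Matrix (Fin n) (Fin n) ℂ)
        = (star (U : Matrix (Fin n) (Fin n) ℂ) * (U : Matrix (Fin n) (Fin n) ℂ)) * A
            * (star (U : Matrix (Fin n) (Fin n) ℂ) * (U : Matrix (Fin n) (Fin n) ℂ)) := by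
          simp only [mul_assoc]
      _ = A := by rw [hsU, one_mul, mul_one]
  calc specNorm A = specNorm (((star U : Matrix.unitaryGroup (Fin n) ℂ) : Matrix (Fin n) (Fin n) ℂ)
        * ((U : Matrix (Fin n) (Fin n) ℂ) * A * star (U : Matrix (Fin n) (Fin n) ℂ))
        * star ((star U : Matrix.unitaryGroup (Fin n) ℂ) : Matrix (Fin n) (Fin n) ℂ)) := by rw [hA]
    _ ≤ _ := key (star U) _

end McWeenyAux

namespace McWeenyAux

lemma star_mul_self_re (z : ℂ) : ((starRingEnd ℂ) z * z).re = ‖z‖ ^ 2 := by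
  rw [mul_comm, Complex.mul_conj, Complex.ofReal_re, Complex.normSq_eq_norm_sq]

lemma sum_sq_entries (A : Matrix (Fin n) (Fin n) ℂ) :
    ∑ i, ∑ j, ‖A i j‖ ^ 2 = (Aᴴ * A).trace.re := by
  rw [Matrix.trace]
  simp only [Matrix.diag_apply, Matrix.mul_apply, Matrix.conjTranspose_apply]
  rw [Complex.re_sum, Finset.sum_comm]
  apply Finset.sum_congr rfl
  intro j _
  rw [Complex.re_sum]
  apply Finset.sum_congr rfl
  intro k _
  exact (star_mul_self_re _).symm

lemma conj_mul (U : Matrix.unitaryGroup (Fin n) ℂ) (A B : Matrix (Fin n) (Fin n) ℂ) :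
    ((U : Matrix (Fin n) (Fin n) ℂ) * A * star (U : Matrix (Fin n) (Fin n) ℂ))
      * ((U : Matrix (Fin n) (Fin n) ℂ) * B * star (U : Matrix (Fin n) (Fin n) ℂ))
    = (U : Matrix (Fin n) (Fin n) ℂ) * (A * B) * star (U : Matrix (Fin n) (Fin n) ℂ) := by
  have hsU : star (U : Matrix (Fin n) (Fin n) ℂ) * (U : Matrix (Fin n) (Fin n) ℂ) = 1 :=
    Unitary.coe_star_mul_self U
  have h1 : star (U : Matrix (Fin n) (Fin n) ℂ) * ((U : Matrix (Fin n) (Fin n) ℂ)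
      * (B * star (U : Matrix (Fin n) (Fin n) ℂ))) = B * star (U : Matrix (Fin n) (Fin n) ℂ) := by
    rw [← mul_assoc, hsU, one_mul]
  simp only [mul_assoc]
  rw [h1]

lemma trace_conj (U : Matrix.unitaryGroup (Fin n) ℂ) (B : Matrix (Fin n) (Fin n) ℂ) :
    ((U : Matrix (Fin n) (Fin n) ℂ) * B * star (U : Matrix (Fin n) (Fin n) ℂ)).trace = B.trace := by
  rw [Matrix.trace_mul_cycle, Unitary.coe_star_mul_self, one_mul]

lemma conjT_conj (U : Matrix.unitaryGroup (Fin n) ℂ) (c : Fin n → ℂ) :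
    ((U : Matrix (Fin n) (Fin n) ℂ) * diagonal c * star (U : Matrix (Fin n) (Fin n) ℂ))ᴴ
      = (U : Matrix (Fin n) (Fin n) ℂ) * diagonal (star c) * star (U : Matrix (Fin n) (Fin n) ℂ) := by
  rw [← Matrix.star_eq_conjTranspose, StarMul.star_mul, StarMul.star_mul, star_star,
    Matrix.star_eq_conjTranspose (diagonal c), Matrix.diagonal_conjTranspose, ← mul_assoc]

lemma frobNorm_conj (U : Matrix.unitaryGroup (Fin n) ℂ) (c : Fin n → ℂ) :
    frobNorm ((U : Matrix (Fin n) (Fin n) ℂ) * diagonal c * star (U : Matrix (Fin n) (Fin n) ℂ))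
      = Real.sqrt (∑ i, ‖c i‖ ^ 2) := by
  rw [frobNorm, sum_sq_entries, conjT_conj, conj_mul, diagonal_mul_diagonal, trace_conj,
    Matrix.trace_diagonal]
  congr 1
  rw [Complex.re_sum]
  apply Finset.sum_congr rfl
  intro i _
  exact star_mul_self_re _

end McWeenyAux

open McWeenyAux

/-- For Hermitian X with eigenvalues in [0,1], X ≠ X², and the McWeeny polynomial
p(x) = 3x² − 2x³ applied as the matrix polynomial P = 3X² − 2X³ with P ≠ P², the ratio
K(X) = ‖X − X²‖_F/‖X − X²‖₂ satisfies K(P) ≤ K(X)². -/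
theorem mcweeny_K_ratio {n : ℕ} (X P : Matrix (Fin n) (Fin n) ℂ)
    (hX : X.IsHermitian) (hev : ∀ i, hX.eigenvalues i ∈ Icc (0 : ℝ) 1)
    (hP : P = 3 • X ^ 2 - 2 • X ^ 3)
    (hXne : X ≠ X ^ 2) (hPne : P ≠ P ^ 2) :
    frobNorm (P - P ^ 2) / specNorm (P - P ^ 2) ≤
      (frobNorm (X - X ^ 2) / specNorm (X - X ^ 2)) ^ 2 := by
  classical
  have hn : 0 < n := by
    rcases Nat.eq_zero_or_pos n with h0 | h
    · exfalso; apply hXne; subst h0; ext i j; exact i.elim0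
    · exact h
  haveI : Nonempty (Fin n) := ⟨⟨0, hn⟩⟩
  set d := hX.eigenvalues with hd
  set U := hX.eigenvectorUnitary with hUdef
  set c : Fin n → ℂ := RCLike.ofReal ∘ d with hc
  have hXd : X = (U : Matrix (Fin n) (Fin n) ℂ) * diagonal c * star (U : Matrix (Fin n) (Fin n) ℂ) :=
    hX.spectral_theorem
  have key : ∀ a b : Fin n → ℂ,
      ((U : Matrix (Fin n) (Fin n) ℂ) * diagonal a * star (U : Matrix (Fin n) (Fin n) ℂ))
        * ((U : Matrix (Fin n) (Fin n) ℂ) * diagonal b * star (U : Matrix (Fin n) (Fin n) ℂ))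
      = (U : Matrix (Fin n) (Fin n) ℂ) * diagonal (a * b) * star (U : Matrix (Fin n) (Fin n) ℂ) :=
    fun a b => by rw [conj_mul, diagonal_mul_diagonal]; rfl
  have hsub : ∀ a b : Fin n → ℂ,
      ((U : Matrix (Fin n) (Fin n) ℂ) * diagonal a * star (U : Matrix (Fin n) (Fin n) ℂ))
        - ((U : Matrix (Fin n) (Fin n) ℂ) * diagonal b * star (U : Matrix (Fin n) (Fin n) ℂ))
      = (U : Matrix (Fin n) (Fin n) ℂ) * diagonal (a - b) * star (U : Matrix (Fin n) (Fin n) ℂ) :=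
    fun a b => by
      rw [← sub_mul, ← mul_sub,
        show Matrix.diagonal a - Matrix.diagonal b = Matrix.diagonal (a - b) from
          Matrix.diagonal_sub a b]
  have hsmul : ∀ (k : ℕ) (a : Fin n → ℂ),
      k • ((U : Matrix (Fin n) (Fin n) ℂ) * diagonal a * star (U : Matrix (Fin n) (Fin n) ℂ))
      = (U : Matrix (Fin n) (Fin n) ℂ) * diagonal (k • a) * star (U : Matrix (Fin n) (Fin n) ℂ) :=
    fun k a => by rw [Matrix.diagonal_smul, mul_smul_comm, smul_mul_assoc]
  have hXmm : X - X ^ 2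
      = (U : Matrix (Fin n) (Fin n) ℂ) * diagonal (c - c * c) * star (U : Matrix (Fin n) (Fin n) ℂ) := by
    rw [pow_two, hXd, key, hsub]
  set q : Fin n → ℂ := fun i => 3 * c i ^ 2 - 2 * c i ^ 3 with hq
  have hPd : P = (U : Matrix (Fin n) (Fin n) ℂ) * diagonal q * star (U : Matrix (Fin n) (Fin n) ℂ) := by
    have h2 : X ^ 2 = (U : Matrix (Fin n) (Fin n) ℂ) * diagonal (c * c)
        * star (U : Matrix (Fin n) (Fin n) ℂ) := by rw [pow_two, hXd, key]
    have h3 : X ^ 3 = (U : Matrix (Fin n) (Fin n) ℂ) * diagonal (c * c * c)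
        * star (U : Matrix (Fin n) (Fin n) ℂ) := by rw [pow_succ, h2, hXd, key]
    rw [hP, h2, h3, hsmul, hsmul, hsub]
    refine congrArg (fun D => (U : Matrix (Fin n) (Fin n) ℂ) * D
      * star (U : Matrix (Fin n) (Fin n) ℂ)) (congrArg _ ?_)
    funext i
    simp only [Pi.sub_apply, Pi.smul_apply, Pi.mul_apply, nsmul_eq_mul, smul_eq_mul,
      Pi.natCast_apply, Pi.ofNat_apply, hq]
    push_cast
    ring
  have hPmm : P - P ^ 2
      = (U : Matrix (Fin n) (Fin n) ℂ) * diagonal (q - q * q) * star (U : Matrix (Fin n) (Fin n) ℂ) := by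
    rw [pow_two, hPd, key, hsub]
  -- real eigenvalue quantities
  set μ : Fin n → ℝ := fun i => d i - d i * d i with hμ
  set ν : Fin n → ℝ := fun i => μ i ^ 2 * (3 + 4 * μ i) with hν
  have hμ0 : ∀ i, 0 ≤ μ i := fun i => by
    have h1 := (hev i).1; have h2 := (hev i).2
    show 0 ≤ d i - d i * d i
    nlinarith
  have hν0 : ∀ i, 0 ≤ ν i := fun i => by
    have h1 := hμ0 i
    show 0 ≤ μ i ^ 2 * (3 + 4 * μ i)
    nlinarith [sq_nonneg (μ i)]
  have hcent : ∀ i, (c - c * c) i = (RCLike.ofReal (μ i) : ℂ) := fun i => by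
    show c i - c i * c i = (RCLike.ofReal (d i - d i * d i) : ℂ)
    rw [hc]
    simp only [Function.comp_apply]
    push_cast
    ring
  have hqent : ∀ i, (q - q * q) i = (RCLike.ofReal (ν i) : ℂ) := fun i => by
    show q i - q i * q i
        = (RCLike.ofReal ((d i - d i * d i) ^ 2 * (3 + 4 * (d i - d i * d i))) : ℂ)
    have hqi : q i = 3 * c i ^ 2 - 2 * c i ^ 3 := rfl
    rw [hqi, hc]
    simp only [Function.comp_apply]
    push_cast
    ring
  have hcnorm : ∀ i, ‖(c - c * c) i‖ = μ i := fun i => by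
    rw [hcent i, RCLike.norm_ofReal, abs_of_nonneg (hμ0 i)]
  have hqnorm : ∀ i, ‖(q - q * q) i‖ = ν i := fun i => by
    rw [hqent i, RCLike.norm_ofReal, abs_of_nonneg (hν0 i)]
  -- max index
  obtain ⟨i₀, -, hi₀⟩ := Finset.exists_max_image Finset.univ μ Finset.univ_nonempty
  have hi₀' : ∀ i, μ i ≤ μ i₀ := fun i => hi₀ i (Finset.mem_univ i)
  have hβpos : 0 < μ i₀ := by
    rcases (hμ0 i₀).lt_or_eq with h | h
    · exact h
    · exfalso
      apply hXne
      have hall : ∀ i, μ i = 0 := fun i => le_antisymm (h ▸ hi₀' i) (hμ0 i)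
      have hzero : c - c * c = 0 := by
        funext i
        have h5 : (c - c * c) i = 0 := by rw [hcent i, hall i]; exact RCLike.ofReal_zero
        exact h5
      have h0 : X - X ^ 2 = 0 := by
        rw [hXmm, hzero]
        have hz : Matrix.diagonal (0 : Fin n → ℂ) = 0 := Matrix.diagonal_zero
        rw [hz, mul_zero, zero_mul]
      exact sub_eq_zero.mp h0
  have hνβpos : 0 < ν i₀ := by
    show 0 < μ i₀ ^ 2 * (3 + 4 * μ i₀)
    nlinarith [hβpos]
  have hνmax : ∀ i, ν i ≤ ν i₀ := fun i => by
    have h1 := hμ0 i; have h2 := hi₀' i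
    show μ i ^ 2 * (3 + 4 * μ i) ≤ μ i₀ ^ 2 * (3 + 4 * μ i₀)
    exact mul_le_mul (by nlinarith) (by linarith) (by linarith) (by positivity)
  -- norm computations
  have hFX : frobNorm (X - X ^ 2) = Real.sqrt (∑ i, μ i ^ 2) := by
    rw [hXmm, frobNorm_conj]
    congr 1
    exact Finset.sum_congr rfl fun i _ => by rw [hcnorm i]
  have hSX : specNorm (X - X ^ 2) = μ i₀ := by
    rw [hXmm, specNorm_conj]
    apply le_antisymm
    · exact specNorm_diag_le _ (hμ0 i₀) fun i => by rw [hcnorm i]; exact hi₀' i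
    · have := le_specNorm_diag (c - c * c) i₀
      rwa [hcnorm i₀] at this
  have hFP : frobNorm (P - P ^ 2) = Real.sqrt (∑ i, ν i ^ 2) := by
    rw [hPmm, frobNorm_conj]
    congr 1
    exact Finset.sum_congr rfl fun i _ => by rw [hqnorm i]
  have hSP : specNorm (P - P ^ 2) = ν i₀ := by
    rw [hPmm, specNorm_conj]
    apply le_antisymm
    · exact specNorm_diag_le _ (hν0 i₀) fun i => by rw [hqnorm i]; exact hνmax i
    · have := le_specNorm_diag (q - q * q) i₀
      rwa [hqnorm i₀] at this
  rw [hFX, hSX, hFP, hSP]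
  have hS0 : (0 : ℝ) ≤ ∑ i, μ i ^ 2 := Finset.sum_nonneg fun i _ => sq_nonneg _
  rw [div_pow, Real.sq_sqrt hS0]
  rw [div_le_div_iff₀ hνβpos (by positivity : (0 : ℝ) < μ i₀ ^ 2)]
  have hTle : Real.sqrt (∑ i, ν i ^ 2) ≤ (3 + 4 * μ i₀) * ∑ i, μ i ^ 2 := by
    have h1 : Real.sqrt (∑ i, ν i ^ 2) ≤ ∑ i, ν i := by
      have h2 : (∑ i, ν i ^ 2) ≤ (∑ i, ν i) ^ 2 :=
        Finset.sum_sq_le_sq_sum_of_nonneg fun i _ => hν0 i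
      calc Real.sqrt (∑ i, ν i ^ 2) ≤ Real.sqrt ((∑ i, ν i) ^ 2) := Real.sqrt_le_sqrt h2
        _ = ∑ i, ν i := Real.sqrt_sq (Finset.sum_nonneg fun i _ => hν0 i)
    calc Real.sqrt (∑ i, ν i ^ 2) ≤ ∑ i, ν i := h1
      _ ≤ ∑ i, (3 + 4 * μ i₀) * μ i ^ 2 := by
          apply Finset.sum_le_sum
          intro i _
          have h1 := hμ0 i; have h2 := hi₀' i
          show μ i ^ 2 * (3 + 4 * μ i) ≤ (3 + 4 * μ i₀) * μ i ^ 2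
          have h3 := mul_le_mul_of_nonneg_left
            (show 3 + 4 * μ i ≤ 3 + 4 * μ i₀ by linarith) (sq_nonneg (μ i))
          nlinarith [h3]
      _ = (3 + 4 * μ i₀) * ∑ i, μ i ^ 2 := by rw [Finset.mul_sum]
  calc Real.sqrt (∑ i, ν i ^ 2) * μ i₀ ^ 2
      ≤ ((3 + 4 * μ i₀) * ∑ i, μ i ^ 2) * μ i₀ ^ 2 :=
        mul_le_mul_of_nonneg_right hTle (by positivity)
    _ = (∑ i, μ i ^ 2) * ν i₀ := by
        have e : ν i₀ = μ i₀ ^ 2 * (3 + 4 * μ i₀) := rfl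
        rw [e]; ring
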